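/- Let φ₀ ∈ (0,1], α₀ = arctan(1/√(3(3−2φ₀))), β₀ = (1/2)(π/2 − α₀), and μ₀ ≥ 0. Define f(λ) for λ > 0 by f(λ) = (1/(2√(2πλ)))·[ e^{−λ/2}(1 − erf((√λ tan β₀ − μ₀)/√2)) + e^{−(√λ − μ₀ cos α₀)²/2}(1 − erf((√λ tan β₀ + μ₀ sin α₀)/√2)) + e^{−(√λ + μ₀ cos α₀)²/2}(1 − erf((√λ tan α₀ + μ₀ sin α₀)/√2)) ]. Then f is a probability density function on (0, ∞), i.e., f ≥ 0 and ∫₀^∞ f(λ) dλ = 1. -/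

import Mathlib

open MeasureTheory Real Set

noncomputable def erf (t : ℝ) : ℝ :=
  (2 / Real.sqrt Real.pi) * ∫ s in (0:ℝ)..t, Real.exp (-s ^ 2)

/-- The approximating density for the likelihood ratio statistic of model T3. -/
noncomputable def fT3 (α₀ β₀ μ₀ l : ℝ) : ℝ :=
  (1 / (2 * Real.sqrt (2 * Real.pi * l))) *
    (Real.exp (-l / 2) * (1 - erf ((Real.sqrt l * Real.tan β₀ - μ₀) / Real.sqrt 2))
      + Real.exp (-(Real.sqrt l - μ₀ * Real.cos α₀) ^ 2 / 2)
          * (1 - erf ((Real.sqrt l * Real.tan β₀ + μ₀ * Real.sin α₀) / Real.sqrt 2))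
      + Real.exp (-(Real.sqrt l + μ₀ * Real.cos α₀) ^ 2 / 2)
          * (1 - erf ((Real.sqrt l * Real.tan α₀ + μ₀ * Real.sin α₀) / Real.sqrt 2)))

noncomputable def Ei (u : ℝ) : ℝ := ∫ y in Set.Ioi u, Real.exp (-(1/2) * y ^ 2)

lemma gauss_int : Integrable (fun y : ℝ => Real.exp (-(1/2) * y ^ 2)) :=
  integrable_exp_neg_mul_sq (by norm_num)

lemma gauss2_int : Integrable (fun y : ℝ => Real.exp (-y ^ 2)) :=
  by simpa using integrable_exp_neg_mul_sq (b := 1) (by norm_num)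

lemma interval_add_Ioi {f : ℝ → ℝ} (hf : Integrable f) (t : ℝ) :
    (∫ s in (0:ℝ)..t, f s) = (∫ s in Set.Ioi (0:ℝ), f s) - ∫ s in Set.Ioi t, f s := by
  rcases le_total 0 t with h | h
  · rw [intervalIntegral.integral_of_le h, ← Set.Ioc_union_Ioi_eq_Ioi h,
      setIntegral_union (Set.Ioc_disjoint_Ioi le_rfl) measurableSet_Ioi
        hf.integrableOn hf.integrableOn]
    ring
  · rw [intervalIntegral.integral_symm, intervalIntegral.integral_of_le h,
      ← Set.Ioc_union_Ioi_eq_Ioi h,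
      setIntegral_union (Set.Ioc_disjoint_Ioi le_rfl) measurableSet_Ioi
        hf.integrableOn hf.integrableOn]
    ring

lemma Ei_eq (u : ℝ) : Ei u = Real.sqrt 2 * ∫ s in Set.Ioi (u / Real.sqrt 2), Real.exp (-s ^ 2) := by
  have h2 : (0:ℝ) < (Real.sqrt 2)⁻¹ := by positivity
  have := integral_comp_mul_left_Ioi (fun s => Real.exp (-s ^ 2)) u h2
  simp only [smul_eq_mul, inv_inv] at this
  have heq : ∀ y : ℝ, Real.exp (-((Real.sqrt 2)⁻¹ * y) ^ 2) = Real.exp (-(1/2) * y ^ 2) := by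
    intro y
    congr 1
    rw [mul_pow, ← Real.sqrt_inv, Real.sq_sqrt (by norm_num)]
    ring
  rw [Ei]
  simp_rw [← heq]
  rw [this, div_eq_inv_mul]

lemma erf_Ei (u : ℝ) :
    1 - erf (u / Real.sqrt 2) = Real.sqrt 2 / Real.sqrt Real.pi * Ei u := by
  have h1 : (∫ s in (0:ℝ)..(u / Real.sqrt 2), Real.exp (-s ^ 2))
      = Real.sqrt Real.pi / 2 - ∫ s in Set.Ioi (u / Real.sqrt 2), Real.exp (-s ^ 2) := by
    rw [interval_add_Ioi gauss2_int]
    congr 1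
    have := integral_gaussian_Ioi 1
    simp only [neg_mul, one_mul] at this
    rw [this, div_one]
  rw [erf, h1, Ei_eq]
  have hπ : (0:ℝ) < Real.sqrt Real.pi := Real.sqrt_pos.mpr Real.pi_pos
  have h2 : Real.sqrt 2 ^ 2 = 2 := Real.sq_sqrt (by norm_num)
  set J := ∫ s in Set.Ioi (u / Real.sqrt 2), Real.exp (-s ^ 2) with hJ
  field_simp
  linear_combination (-J) * h2

noncomputable def homeo2 (a b c d : ℝ) (h : a * d - b * c ≠ 0) : (ℝ × ℝ) ≃ₜ (ℝ × ℝ) where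
  toFun z := (a * z.1 + b * z.2, c * z.1 + d * z.2)
  invFun w := ((d * w.1 - b * w.2) / (a * d - b * c), (-c * w.1 + a * w.2) / (a * d - b * c))
  left_inv z := by
    apply Prod.ext <;> · simp only; rw [div_eq_iff h]; ring
  right_inv w := by
    apply Prod.ext <;> · simp only; rw [mul_div_assoc', mul_div_assoc', ← add_div, div_eq_iff h]; ring
  continuous_toFun := by fun_prop
  continuous_invFun := by fun_prop

lemma homeo2_lin (a b c d : ℝ) (h : a * d - b * c ≠ 0) :
    ⇑(homeo2 a b c d h) = ⇑(Matrix.toLin (Module.Basis.finTwoProd ℝ) (Module.Basis.finTwoProd ℝ)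
      !![a, b; c, d]) := by
  funext z
  rw [Matrix.toLin_finTwoProd_apply]
  rfl

lemma measurePreserving_homeo2 (a b c d : ℝ) (h : |a * d - b * c| = 1) :
    MeasurePreserving (⇑(homeo2 a b c d (by intro h0; rw [h0] at h; simp at h)))
      volume volume := by
  have hdet : a * d - b * c ≠ 0 := by intro h0; rw [h0] at h; simp at h
  constructor
  · exact (homeo2 a b c d hdet).continuous.measurable
  · rw [homeo2_lin]
    rw [Measure.map_linearMap_addHaar_eq_smul_addHaar volume
      (by rw [LinearMap.det_toLin, Matrix.det_fin_two_of]; exact hdet)]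
    rw [LinearMap.det_toLin, Matrix.det_fin_two_of, abs_inv, h]
    norm_num

lemma cov2 (a b c d : ℝ) (h : |a * d - b * c| = 1) (W : Set (ℝ × ℝ)) (f : ℝ × ℝ → ℝ) :
    ∫ z in (fun z : ℝ × ℝ => (a * z.1 + b * z.2, c * z.1 + d * z.2)) ⁻¹' W,
      f (a * z.1 + b * z.2, c * z.1 + d * z.2) = ∫ w in W, f w := by
  have hdet : a * d - b * c ≠ 0 := by intro h0; rw [h0] at h; simp at h
  have := (measurePreserving_homeo2 a b c d h).setIntegral_preimage_emb
    (homeo2 a b c d hdet).measurableEmbedding f W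
  exact this

lemma cov_add (v : ℝ × ℝ) (A : Set (ℝ × ℝ)) (f : ℝ × ℝ → ℝ) :
    ∫ z in (fun z : ℝ × ℝ => z + v) ⁻¹' A, f (z + v) = ∫ w in A, f w := by
  exact (measurePreserving_add_right volume v).setIntegral_preimage_emb
    (Homeomorph.addRight v).measurableEmbedding f A

noncomputable def g2 (z : ℝ × ℝ) : ℝ :=
  Real.exp (-(1/2) * z.1 ^ 2) * Real.exp (-(1/2) * z.2 ^ 2)

lemma g2_int : Integrable g2 (volume : Measure (ℝ × ℝ)) := by
  rw [Measure.volume_eq_prod]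
  exact gauss_int.mul_prod gauss_int

lemma g2_nonneg (z : ℝ × ℝ) : 0 ≤ g2 z := by
  unfold g2; positivity

lemma g2_rad (z : ℝ × ℝ) : g2 z = Real.exp (-(1/2) * (z.1 ^ 2 + z.2 ^ 2)) := by
  rw [g2, ← Real.exp_add]; ring_nf

lemma Ei_antitone : Antitone Ei := by
  intro u v huv
  exact setIntegral_mono_set gauss_int.integrableOn
    (Filter.Eventually.of_forall fun y => by positivity)
    (HasSubset.Subset.eventuallyLE (Set.Ioi_subset_Ioi huv))

lemma Ei_measurable : Measurable Ei := Ei_antitone.measurable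

lemma Ei_nonneg (u : ℝ) : 0 ≤ Ei u :=
  setIntegral_nonneg measurableSet_Ioi fun y _ => by positivity

lemma Ei_le (u : ℝ) : Ei u ≤ Real.sqrt (2 * π) := by
  have h1 : Ei u ≤ ∫ y : ℝ, Real.exp (-(1/2) * y ^ 2) := by
    apply setIntegral_le_integral gauss_int
    exact Filter.Eventually.of_forall fun y => by positivity
  have h2 : ∫ y : ℝ, Real.exp (-(1/2) * y ^ 2) = Real.sqrt (2 * π) := by
    rw [integral_gaussian, show π / (1/2) = 2 * π by ring]
  linarith

lemma mul_Ei_integrable {F : ℝ → ℝ} (hF : Integrable F) (hFnn : ∀ x, 0 ≤ F x) (p q : ℝ) :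
    Integrable (fun x => F x * Ei (p * x + q)) := by
  apply Integrable.mono (hF.const_mul (Real.sqrt (2 * π)))
  · exact hF.aestronglyMeasurable.mul
      ((Ei_measurable.comp (by fun_prop : Measurable fun x : ℝ => p * x + q)).aestronglyMeasurable)
  · refine Filter.Eventually.of_forall fun x => ?_
    simp only [Real.norm_eq_abs, abs_mul]
    rw [abs_of_nonneg (hFnn x), abs_of_nonneg (Ei_nonneg _),
      abs_of_nonneg (Real.sqrt_nonneg _)]
    have := Ei_le (p * x + q)
    nlinarith [hFnn x, Ei_nonneg (p * x + q), Real.sqrt_nonneg (2 * π)]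

lemma fubini_region (p q : ℝ) (F : ℝ → ℝ) (hF : Integrable F) :
    ∫ z in {z : ℝ × ℝ | 0 < z.1 ∧ p * z.1 + q < z.2}, F z.1 * Real.exp (-(1/2) * z.2 ^ 2)
      = ∫ x in Set.Ioi (0:ℝ), F x * Ei (p * x + q) := by
  set S : Set (ℝ × ℝ) := {z : ℝ × ℝ | 0 < z.1 ∧ p * z.1 + q < z.2} with hS
  have hSm : MeasurableSet S := by
    apply MeasurableSet.inter
    · exact measurableSet_lt measurable_const measurable_fst
    · exact measurableSet_lt (by fun_prop) measurable_snd
  have hint : Integrable (fun z : ℝ × ℝ => F z.1 * Real.exp (-(1/2) * z.2 ^ 2)) volume := by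
    rw [Measure.volume_eq_prod]
    exact hF.mul_prod gauss_int
  have hind : Integrable (S.indicator fun z : ℝ × ℝ => F z.1 * Real.exp (-(1/2) * z.2 ^ 2))
      volume := hint.indicator hSm
  rw [← integral_indicator hSm]
  rw [Measure.volume_eq_prod] at hind ⊢
  rw [integral_prod _ hind]
  rw [← integral_indicator measurableSet_Ioi]
  congr 1
  funext x
  by_cases hx : 0 < x
  · have : (fun y => S.indicator (fun z : ℝ × ℝ => F z.1 * Real.exp (-(1/2) * z.2 ^ 2)) (x, y))
        = (Set.Ioi (p * x + q)).indicator (fun y => F x * Real.exp (-(1/2) * y ^ 2)) := by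
      funext y
      simp only [Set.indicator, hS, Set.mem_setOf_eq, Set.mem_Ioi, hx, true_and]
    rw [this, integral_indicator measurableSet_Ioi, Set.indicator_of_mem (Set.mem_Ioi.mpr hx),
      integral_const_mul]
    rfl
  · have : (fun y => S.indicator (fun z : ℝ × ℝ => F z.1 * Real.exp (-(1/2) * z.2 ^ 2)) (x, y))
        = fun _ => (0:ℝ) := by
      funext y
      simp only [Set.indicator, hS, Set.mem_setOf_eq, hx, false_and, if_false]
    rw [this, integral_zero, Set.indicator_of_notMem (by simpa using hx)]

lemma line_null (a b κ : ℝ) (hb : b ≠ 0) :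
    volume {z : ℝ × ℝ | a * z.1 + b * z.2 = κ} = 0 := by
  have hSm : MeasurableSet {z : ℝ × ℝ | a * z.1 + b * z.2 = κ} :=
    measurableSet_eq_fun (by fun_prop) measurable_const
  rw [Measure.volume_eq_prod, Measure.measure_prod_null hSm]
  refine Filter.Eventually.of_forall fun x => ?_
  have : (Prod.mk x ⁻¹' {z : ℝ × ℝ | a * z.1 + b * z.2 = κ}) = {(κ - a * x) / b} := by
    ext y
    simp only [Set.mem_preimage, Set.mem_setOf_eq, Set.mem_singleton_iff]
    rw [eq_div_iff hb]
    constructor <;> intro h <;> linarith [mul_comm y b]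
  simp [this]

lemma halfplane_integral :
    ∫ z in {z : ℝ × ℝ | 0 < z.2}, g2 z = π := by
  have hset : {z : ℝ × ℝ | 0 < z.2} = (Set.univ : Set ℝ) ×ˢ Set.Ioi (0:ℝ) := by
    ext z; simp [Set.mem_prod]
  rw [hset]
  simp only [g2]
  rw [Measure.volume_eq_prod,
    setIntegral_prod_mul (fun x : ℝ => Real.exp (-(1/2) * x ^ 2))
      (fun y : ℝ => Real.exp (-(1/2) * y ^ 2)) Set.univ (Set.Ioi (0:ℝ)),
    setIntegral_univ, integral_gaussian, integral_gaussian_Ioi]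
  rw [show π / (1/2) = 2 * π by ring]
  have h : Real.sqrt (2*π) * Real.sqrt (2*π) = 2*π := Real.mul_self_sqrt (by positivity)
  linear_combination h / 2

lemma partition_integral (μ ca sa cb sb : ℝ)
    (hca : 0 < ca) (hsa : 0 < sa) (hcb : 0 < cb) (hsb : 0 < sb) :
    (∫ z in {z : ℝ × ℝ | 0 < z.2 ∧ 0 < (z.1 - μ) * ca - z.2 * sa}, g2 z)
      + (∫ z in {z : ℝ × ℝ | 0 < z.2 * sa - (z.1 - μ) * ca ∧ 0 < (z.1 - μ) * cb + z.2 * sb}, g2 z)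
      + (∫ z in {z : ℝ × ℝ | 0 < z.2 ∧ (z.1 - μ) * cb + z.2 * sb < 0}, g2 z)
      = π := by
  set W1 : Set (ℝ × ℝ) := {z : ℝ × ℝ | 0 < z.2 ∧ 0 < (z.1 - μ) * ca - z.2 * sa} with hW1
  set W2 : Set (ℝ × ℝ) :=
    {z : ℝ × ℝ | 0 < z.2 * sa - (z.1 - μ) * ca ∧ 0 < (z.1 - μ) * cb + z.2 * sb} with hW2
  set W3 : Set (ℝ × ℝ) := {z : ℝ × ℝ | 0 < z.2 ∧ (z.1 - μ) * cb + z.2 * sb < 0} with hW3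
  have m1 : MeasurableSet W1 := by
    rw [hW1, Set.setOf_and]
    exact (measurableSet_lt measurable_const measurable_snd).inter
      (measurableSet_lt measurable_const (by fun_prop))
  have m2 : MeasurableSet W2 := by
    rw [hW2, Set.setOf_and]
    exact (measurableSet_lt measurable_const (by fun_prop)).inter
      (measurableSet_lt measurable_const (by fun_prop))
  have m3 : MeasurableSet W3 := by
    rw [hW3, Set.setOf_and]
    exact (measurableSet_lt measurable_const measurable_snd).inter
      (measurableSet_lt (by fun_prop) measurable_const)
  -- auxiliary implication: in W1 the quantity D is positive
  have key : ∀ z : ℝ × ℝ, 0 < z.2 → 0 < (z.1 - μ) * ca - z.2 * sa →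
      0 < (z.1 - μ) * cb + z.2 * sb := by
    intro z hv hA
    have h2 : 0 < z.1 - μ := by nlinarith
    nlinarith
  -- disjointness
  have d12 : Disjoint W1 W2 := by
    rw [Set.disjoint_left]
    intro z h1 h2
    simp only [hW1, hW2, Set.mem_setOf_eq] at h1 h2
    linarith [h1.2, h2.1]
  have d123 : Disjoint (W1 ∪ W2) W3 := by
    rw [Set.disjoint_left]
    intro z h1 h2
    simp only [hW3, Set.mem_setOf_eq] at h2
    rcases h1 with h1 | h1
    · simp only [hW1, Set.mem_setOf_eq] at h1
      linarith [key z h1.1 h1.2, h2.2]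
    · simp only [hW2, Set.mem_setOf_eq] at h1
      linarith [h1.2, h2.2]
  rw [← setIntegral_union d12 m2 (g2_int.integrableOn) (g2_int.integrableOn),
    ← setIntegral_union d123 m3 (g2_int.integrableOn) (g2_int.integrableOn)]
  rw [← halfplane_integral]
  apply setIntegral_congr_set
  rw [MeasureTheory.ae_eq_set]
  constructor
  · have hsub : (W1 ∪ W2 ∪ W3) \ {z : ℝ × ℝ | 0 < z.2} = ∅ := by
      rw [Set.diff_eq_empty]
      intro z hz
      simp only [Set.mem_setOf_eq]
      rcases hz with (h1 | h1) | h1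
      · exact h1.1
      · simp only [hW2, Set.mem_setOf_eq] at h1
        by_contra hv
        push_neg at hv
        have h1' : z.1 - μ < 0 := by nlinarith [h1.1]
        nlinarith [h1.2]
      · exact h1.1
    rw [hsub]
    simp
  · refine measure_mono_null (fun z hz => ?_)
      (measure_union_null (line_null ca (-sa) (ca * μ) (by linarith))
        (line_null cb sb (cb * μ) (by linarith)))
    obtain ⟨hv, hz⟩ := hz
    simp only [Set.mem_setOf_eq] at hv
    simp only [hW1, hW2, hW3, Set.mem_union, Set.mem_setOf_eq, not_or, not_and, not_lt] at hz
    obtain ⟨⟨h1, h2⟩, h3⟩ := hz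
    have hA := h1 hv
    have hD := h3 hv
    simp only [Set.mem_union, Set.mem_setOf_eq]
    rcases lt_or_eq_of_le hA with hAlt | hAeq
    · have := h2 (by linarith)
      right; linarith
    · left; linarith

lemma div_slope_iff (s c q X Y : ℝ) (hc : 0 < c) :
    s / c * X + q < Y ↔ s * X + q * c < Y * c := by
  rw [div_mul_eq_mul_div, ← lt_sub_iff_add_lt, div_lt_iff₀ hc]
  constructor <;> intro h <;> nlinarith

lemma core (A B μ : ℝ) (hA1 : 0 < A) (hA2 : A < π/2) (hB : B = π/4 - A/2) (hμ : 0 ≤ μ) :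
    (∫ x in Set.Ioi (0:ℝ),
      (Real.exp (-(1/2) * x^2) * Ei (Real.tan B * x - μ)
      + Real.exp (-(1/2) * (x - μ * Real.cos A)^2) * Ei (Real.tan B * x + μ * Real.sin A)
      + Real.exp (-(1/2) * (x + μ * Real.cos A)^2) * Ei (Real.tan A * x + μ * Real.sin A)))
      = π := by
  have hπ := Real.pi_pos
  have hB1 : 0 < B := by rw [hB]; linarith
  have hB2 : B < π/4 := by rw [hB]; linarith
  set sa := Real.sin A with hsa_def
  set ca := Real.cos A with hca_def
  set sb := Real.sin B with hsb_def
  set cb := Real.cos B with hcb_def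
  have hsa : 0 < sa := Real.sin_pos_of_pos_of_lt_pi hA1 (by linarith)
  have hca : 0 < ca := Real.cos_pos_of_mem_Ioo ⟨by linarith, hA2⟩
  have hsb : 0 < sb := Real.sin_pos_of_pos_of_lt_pi hB1 (by linarith)
  have hcb : 0 < cb := Real.cos_pos_of_mem_Ioo ⟨by linarith, by linarith⟩
  have pyth : sa^2 + ca^2 = 1 := Real.sin_sq_add_cos_sq A
  have pythb : sb^2 + cb^2 = 1 := Real.sin_sq_add_cos_sq B
  have hkey1 : sa * cb + ca * sb = cb := by
    have h1 : Real.sin (A + B) = cb := by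
      rw [show A + B = π/2 - B by rw [hB]; ring, Real.sin_pi_div_two_sub]
    rw [Real.sin_add] at h1
    linarith
  have hkey2 : ca * cb - sa * sb = sb := by
    have h1 : Real.cos (A + B) = sb := by
      rw [show A + B = π/2 - B by rw [hB]; ring, Real.cos_pi_div_two_sub]
    rw [Real.cos_add] at h1
    linarith
  have htanA : Real.tan A = sa / ca := Real.tan_eq_sin_div_cos A
  have htanB : Real.tan B = sb / cb := Real.tan_eq_sin_div_cos B
  set c := μ * ca with hc_def
  -- the three wedges
  set W1 : Set (ℝ × ℝ) := {z : ℝ × ℝ | 0 < z.2 ∧ 0 < (z.1 - μ) * ca - z.2 * sa} with hW1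
  set W2 : Set (ℝ × ℝ) :=
    {z : ℝ × ℝ | 0 < z.2 * sa - (z.1 - μ) * ca ∧ 0 < (z.1 - μ) * cb + z.2 * sb} with hW2
  set W3 : Set (ℝ × ℝ) := {z : ℝ × ℝ | 0 < z.2 ∧ (z.1 - μ) * cb + z.2 * sb < 0} with hW3
  have hregm : ∀ p q : ℝ, MeasurableSet {z : ℝ × ℝ | 0 < z.1 ∧ p * z.1 + q < z.2} := by
    intro p q
    rw [Set.setOf_and]
    exact (measurableSet_lt measurable_const measurable_fst).inter
      (measurableSet_lt (by fun_prop) measurable_snd)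
  -- Term 1
  have t1 : ∫ x in Set.Ioi (0:ℝ), Real.exp (-(1/2) * x^2) * Ei (Real.tan B * x - μ)
      = ∫ z in W3, g2 z := by
    have hset : (fun z : ℝ × ℝ => ((0:ℝ) * z.1 + (-1) * z.2, (1:ℝ) * z.1 + (0:ℝ) * z.2)) ⁻¹' W3
        = {z : ℝ × ℝ | 0 < z.1 ∧ Real.tan B * z.1 + -μ < z.2} := by
      ext z
      simp only [Set.mem_preimage, hW3, Set.mem_setOf_eq]
      rw [htanB, div_slope_iff sb cb (-μ) z.1 z.2 hcb]
      constructor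
      · rintro ⟨h1, h2⟩
        exact ⟨by linarith, by nlinarith⟩
      · rintro ⟨h1, h2⟩
        exact ⟨by linarith, by nlinarith⟩
    have hcov := cov2 0 (-1) 1 0 (by norm_num) W3 g2
    rw [hset] at hcov
    rw [← hcov]
    have hfub := fubini_region (Real.tan B) (-μ) (fun x => Real.exp (-(1/2) * x^2)) gauss_int
    simp only [sub_eq_add_neg]
    rw [← hfub]
    apply setIntegral_congr_fun (hregm _ _)
    intro z _
    simp only [g2]
    rw [← Real.exp_add, ← Real.exp_add]
    congr 1
    ring
  -- Term 2
  have t2 : ∫ x in Set.Ioi (0:ℝ),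
      Real.exp (-(1/2) * (x - μ * ca)^2) * Ei (Real.tan B * x + μ * sa)
      = ∫ z in W2, g2 z := by
    have hdet2 : |(-ca) * ca - sa * sa| = 1 := by
      rw [show (-ca) * ca - sa * sa = -(sa^2 + ca^2) by ring, pyth]; norm_num
    have hcov := cov2 (-ca) sa sa ca hdet2 W2 g2
    have horth : ∀ z : ℝ × ℝ, g2 ((-ca) * z.1 + sa * z.2, sa * z.1 + ca * z.2) = g2 z := by
      intro z
      rw [g2_rad, g2_rad]
      congr 1
      simp only
      linear_combination (-(1/2)) * (z.1^2 + z.2^2) * pyth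
    simp only [horth] at hcov
    have hadd := cov_add (-(μ*ca), 0)
      ((fun z : ℝ × ℝ => ((-ca) * z.1 + sa * z.2, sa * z.1 + ca * z.2)) ⁻¹' W2) g2
    rw [hcov] at hadd
    have hsetS : (fun z : ℝ × ℝ => z + (-(μ*ca), 0)) ⁻¹'
        ((fun z : ℝ × ℝ => ((-ca) * z.1 + sa * z.2, sa * z.1 + ca * z.2)) ⁻¹' W2)
        = {z : ℝ × ℝ | 0 < z.1 ∧ Real.tan B * z.1 + μ * sa < z.2} := by
      ext z
      simp only [Set.mem_preimage, hW2, Set.mem_setOf_eq, Prod.fst_add, Prod.snd_add]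
      have E1 : (sa * (z.1 + -(μ * ca)) + ca * (z.2 + 0)) * sa
          - (-ca * (z.1 + -(μ * ca)) + sa * (z.2 + 0) - μ) * ca = z.1 := by
        linear_combination (z.1 - μ * ca) * pyth
      have E2 : (-ca * (z.1 + -(μ * ca)) + sa * (z.2 + 0) - μ) * cb
          + (sa * (z.1 + -(μ * ca)) + ca * (z.2 + 0)) * sb
          = z.2 * cb - (sb * z.1 + μ * sa * cb) := by
        linear_combination (z.2 + μ) * hkey1 + (μ * ca - z.1) * hkey2
      rw [E1, E2, htanB, div_slope_iff sb cb (μ * sa) z.1 z.2 hcb]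
      constructor <;> rintro ⟨h1, h2⟩ <;> exact ⟨h1, by linarith⟩
    rw [hsetS] at hadd
    rw [← hadd]
    have hF2 : Integrable (fun x : ℝ => Real.exp (-(1/2) * (x - μ * ca)^2)) :=
      gauss_int.comp_sub_right (μ * ca)
    rw [← fubini_region (Real.tan B) (μ * sa)
      (fun x => Real.exp (-(1/2) * (x - μ * ca)^2)) hF2]
    apply setIntegral_congr_fun (hregm _ _)
    intro z _
    simp only [g2, Prod.fst_add, Prod.snd_add]
    rw [← Real.exp_add, ← Real.exp_add]
    congr 1
    ring
  -- Term 3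
  have t3 : ∫ x in Set.Ioi (0:ℝ),
      Real.exp (-(1/2) * (x + μ * ca)^2) * Ei (Real.tan A * x + μ * sa)
      = ∫ z in W1, g2 z := by
    have hdet3 : |ca * ca - sa * (-sa)| = 1 := by
      rw [show ca * ca - sa * (-sa) = sa^2 + ca^2 by ring, pyth]; norm_num
    have hcov := cov2 ca sa (-sa) ca hdet3 W1 g2
    have horth : ∀ z : ℝ × ℝ, g2 (ca * z.1 + sa * z.2, (-sa) * z.1 + ca * z.2) = g2 z := by
      intro z
      rw [g2_rad, g2_rad]
      congr 1
      simp only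
      linear_combination (-(1/2)) * (z.1^2 + z.2^2) * pyth
    simp only [horth] at hcov
    have hadd := cov_add (μ*ca, 0)
      ((fun z : ℝ × ℝ => (ca * z.1 + sa * z.2, (-sa) * z.1 + ca * z.2)) ⁻¹' W1) g2
    rw [hcov] at hadd
    have hsetS : (fun z : ℝ × ℝ => z + (μ*ca, 0)) ⁻¹'
        ((fun z : ℝ × ℝ => (ca * z.1 + sa * z.2, (-sa) * z.1 + ca * z.2)) ⁻¹' W1)
        = {z : ℝ × ℝ | 0 < z.1 ∧ Real.tan A * z.1 + μ * sa < z.2} := by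
      ext z
      simp only [Set.mem_preimage, hW1, Set.mem_setOf_eq, Prod.fst_add, Prod.snd_add]
      have E1 : (ca * (z.1 + μ * ca) + sa * (z.2 + 0) - μ) * ca
          - (-sa * (z.1 + μ * ca) + ca * (z.2 + 0)) * sa = z.1 := by
        linear_combination (z.1 + μ * ca) * pyth
      have E2 : -sa * (z.1 + μ * ca) + ca * (z.2 + 0)
          = z.2 * ca - (sa * z.1 + μ * sa * ca) := by ring
      rw [E1, E2, htanA, div_slope_iff sa ca (μ * sa) z.1 z.2 hca]
      constructor <;> rintro ⟨h1, h2⟩ <;> exact ⟨by linarith, by linarith⟩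
    rw [hsetS] at hadd
    rw [← hadd]
    have hF3 : Integrable (fun x : ℝ => Real.exp (-(1/2) * (x + μ * ca)^2)) := by
      simpa [sub_neg_eq_add] using gauss_int.comp_sub_right (-(μ * ca))
    rw [← fubini_region (Real.tan A) (μ * sa)
      (fun x => Real.exp (-(1/2) * (x + μ * ca)^2)) hF3]
    apply setIntegral_congr_fun (hregm _ _)
    intro z _
    simp only [g2, Prod.fst_add, Prod.snd_add]
    rw [← Real.exp_add, ← Real.exp_add]
    congr 1
    ring
  have i1 : IntegrableOn (fun x => Real.exp (-(1/2) * x^2) * Ei (Real.tan B * x - μ))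
      (Set.Ioi (0:ℝ)) volume :=
    (mul_Ei_integrable gauss_int (fun x => by positivity) (Real.tan B) (-μ)).integrableOn.congr_fun
      (fun x _ => by beta_reduce; ring_nf) measurableSet_Ioi
  have i2 : IntegrableOn (fun x => Real.exp (-(1/2) * (x - μ * ca)^2)
      * Ei (Real.tan B * x + μ * sa)) (Set.Ioi (0:ℝ)) volume := by
    have hF : Integrable (fun x : ℝ => Real.exp (-(1/2) * (x - μ * ca)^2)) :=
      gauss_int.comp_sub_right (μ * ca)
    exact (mul_Ei_integrable hF (fun x => by positivity) (Real.tan B) (μ * sa)).integrableOn.congr_fun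
      (fun x _ => by beta_reduce; ring_nf) measurableSet_Ioi
  have i3 : IntegrableOn (fun x => Real.exp (-(1/2) * (x + μ * ca)^2)
      * Ei (Real.tan A * x + μ * sa)) (Set.Ioi (0:ℝ)) volume := by
    have hF : Integrable (fun x : ℝ => Real.exp (-(1/2) * (x + μ * ca)^2)) := by
      simpa [sub_neg_eq_add] using gauss_int.comp_sub_right (-(μ * ca))
    exact (mul_Ei_integrable hF (fun x => by positivity) (Real.tan A) (μ * sa)).integrableOn.congr_fun
      (fun x _ => by beta_reduce; ring_nf) measurableSet_Ioi
  have i12 : IntegrableOn (fun x => Real.exp (-(1/2) * x^2) * Ei (Real.tan B * x - μ)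
      + Real.exp (-(1/2) * (x - μ * ca)^2) * Ei (Real.tan B * x + μ * sa))
      (Set.Ioi (0:ℝ)) volume := i1.add i2
  rw [integral_add i12 i3, integral_add i1 i2, t1, t2, t3]
  rw [show (∫ z in W3, g2 z) + (∫ z in W2, g2 z) + (∫ z in W1, g2 z)
    = (∫ z in W1, g2 z) + (∫ z in W2, g2 z) + (∫ z in W3, g2 z) by ring]
  exact partition_integral μ ca sa cb sb hca hsa hcb hsb

theorem stmt_12 (φ₀ μ₀ : ℝ) (hφ : φ₀ ∈ Set.Ioc (0:ℝ) 1) (hμ : 0 ≤ μ₀) :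
    let α₀ := Real.arctan (1 / Real.sqrt (3 * (3 - 2 * φ₀)))
    let β₀ := (1 / 2) * (Real.pi / 2 - α₀)
    (∀ l : ℝ, 0 < l → 0 ≤ fT3 α₀ β₀ μ₀ l) ∧
    ∫ l in Set.Ioi (0:ℝ), fT3 α₀ β₀ μ₀ l = 1 := by
  intro α₀ β₀
  have hπ := Real.pi_pos
  have ht : 0 < 1 / Real.sqrt (3 * (3 - 2 * φ₀)) := by
    have h3 : (0:ℝ) < 3 * (3 - 2 * φ₀) := by nlinarith [hφ.2]
    positivity
  have hA1 : 0 < α₀ := by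
    have := Real.arctan_strictMono ht
    rwa [Real.arctan_zero] at this
  have hA2 : α₀ < π / 2 := Real.arctan_lt_pi_div_two _
  have hB : β₀ = π / 4 - α₀ / 2 := by show (1/2) * (π/2 - α₀) = _; ring
  have herfc : ∀ u : ℝ, 0 ≤ 1 - erf (u / Real.sqrt 2) := fun u => by
    rw [erf_Ei]
    exact mul_nonneg (by positivity) (Ei_nonneg u)
  constructor
  · intro l hl
    rw [fT3]
    apply mul_nonneg (by positivity)
    have e1 := herfc (Real.sqrt l * Real.tan β₀ - μ₀)
    have e2 := herfc (Real.sqrt l * Real.tan β₀ + μ₀ * Real.sin α₀)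
    have e3 := herfc (Real.sqrt l * Real.tan α₀ + μ₀ * Real.sin α₀)
    have p1 : (0:ℝ) ≤ Real.exp (-l / 2) := le_of_lt (Real.exp_pos _)
    have p2 : (0:ℝ) ≤ Real.exp (-(Real.sqrt l - μ₀ * Real.cos α₀) ^ 2 / 2) :=
      le_of_lt (Real.exp_pos _)
    have p3 : (0:ℝ) ≤ Real.exp (-(Real.sqrt l + μ₀ * Real.cos α₀) ^ 2 / 2) :=
      le_of_lt (Real.exp_pos _)
    have := mul_nonneg p1 e1
    have := mul_nonneg p2 e2
    have := mul_nonneg p3 e3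
    linarith
  · rw [← integral_comp_rpow_Ioi (fun l => fT3 α₀ β₀ μ₀ l) (p := 2) two_ne_zero]
    have key : ∀ x ∈ Set.Ioi (0:ℝ),
        (|(2:ℝ)| * x ^ ((2:ℝ) - 1)) • fT3 α₀ β₀ μ₀ (x ^ (2:ℝ))
        = (1/π) * (Real.exp (-(1/2) * x^2) * Ei (Real.tan β₀ * x - μ₀)
          + Real.exp (-(1/2) * (x - μ₀ * Real.cos α₀)^2)
              * Ei (Real.tan β₀ * x + μ₀ * Real.sin α₀)
          + Real.exp (-(1/2) * (x + μ₀ * Real.cos α₀)^2)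
              * Ei (Real.tan α₀ * x + μ₀ * Real.sin α₀)) := by
      intro x hx
      rw [Set.mem_Ioi] at hx
      have hx2 : x ^ ((2:ℝ)) = x ^ 2 := by
        rw [show (2:ℝ) = ((2:ℕ):ℝ) by norm_num, Real.rpow_natCast]
      have hx1 : x ^ ((2:ℝ) - 1) = x := by
        rw [show (2:ℝ) - 1 = 1 by norm_num, Real.rpow_one]
      rw [hx2, hx1, fT3]
      rw [Real.sqrt_sq hx.le]
      rw [show 2 * π * x^2 = (2*π) * x^2 by ring, Real.sqrt_mul (by positivity) (x^2),
        Real.sqrt_sq hx.le]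
      rw [erf_Ei (x * Real.tan β₀ - μ₀), erf_Ei (x * Real.tan β₀ + μ₀ * Real.sin α₀),
        erf_Ei (x * Real.tan α₀ + μ₀ * Real.sin α₀)]
      rw [show -x^2/2 = -(1/2) * x^2 by ring,
        show -(x - μ₀ * Real.cos α₀)^2/2 = -(1/2) * (x - μ₀ * Real.cos α₀)^2 by ring,
        show -(x + μ₀ * Real.cos α₀)^2/2 = -(1/2) * (x + μ₀ * Real.cos α₀)^2 by ring,
        mul_comm x (Real.tan β₀), mul_comm x (Real.tan α₀)]
      have hsq : Real.sqrt (2*π) = Real.sqrt 2 * Real.sqrt π := Real.sqrt_mul (by norm_num) π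
      have hππ : Real.sqrt π * Real.sqrt π = π := Real.mul_self_sqrt hπ.le
      have h2ne : Real.sqrt 2 ≠ 0 := by positivity
      have hπne : Real.sqrt π ≠ 0 := by positivity
      rw [smul_eq_mul, hsq]
      field_simp
      linear_combination (-(2 *
        (Real.exp (-(x^2/2)) * Ei (x * Real.tan β₀ - μ₀)
          + Real.exp (-((x - μ₀ * Real.cos α₀)^2/2)) * Ei (x * Real.tan β₀ + μ₀ * Real.sin α₀)
          + Real.exp (-((x + μ₀ * Real.cos α₀)^2/2)) * Ei (x * Real.tan α₀ + μ₀ * Real.sin α₀))))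
        * hππ
    rw [setIntegral_congr_fun measurableSet_Ioi key, integral_const_mul,
      core α₀ β₀ μ₀ hA1 hA2 hB hμ]
    field_simp
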